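/- Let π = (π_s : s ∈ S) be strictly positive with ∑_{s∈S} π_s · E_s(T) = 1, and define the probability measure ℙ on I^ℕ by ℙ(B) = ∑_{s∈S} π_s ∑_{n≥0} P_s({T > n} ∩ Θ_n^{-1}B). Then, without any further hypothesis, for every m ≥ 0 and every word (i_0, …, i_m) ∈ I^{m+1} with i_0 ∈ I \ S, the stationarity identity ℙ(X_l = i_l, l = 0,…,m) = ∑_{j∈I} ℙ(X_0 = j, X_{l+1} = i_l, l = 0,…,m) holds. -/
import Mathlib


open MeasureTheory Filter
open scoped ENNReal NNReal ENat

variable {I : Type*} [MeasurableSpace I]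

/-- The shift map `Θ_q` on sequences: `(Θ_q x) n = x (n + q)`. -/
def shiftI (q : ℕ) (x : ℕ → I) : ℕ → I := fun n => x (n + q)

/-- The hitting time of a different class:
`T(x) = inf {n > 0 : x n ∈ S \ C(x 0)}` (with `inf ∅ = ∞`), where the class `C(x 0)` is
taken with respect to the equivalence relation `sim`. -/
noncomputable def hitT (S : Finset I) (sim : I → I → Prop) (x : ℕ → I) : ℕ∞ :=
  sInf ((fun n : ℕ => (n : ℕ∞)) '' {n : ℕ | 0 < n ∧ x n ∈ S ∧ ¬ sim (x 0) (x n)})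

/-- The expectation `E(T)` of the hitting time `T` under `P`. -/
noncomputable def hitET (S : Finset I) (sim : I → I → Prop) (P : Measure (ℕ → I)) : ℝ≥0∞ :=
  ∫⁻ x, (hitT S sim x : ℝ≥0∞) ∂P

/-- The measure `ℙ(B) = ∑_{s ∈ S} π_s ∑_{n ≥ 0} P_s({T > n} ∩ Θ_n⁻¹ B)`. -/
noncomputable def lawP (S : Finset I) (sim : I → I → Prop) (π : I → ℝ≥0)
    (P : I → Measure (ℕ → I)) : Measure (ℕ → I) :=
  ∑ s ∈ S, π s •
    Measure.sum (fun n : ℕ => ((P s).restrict {x | (n : ℕ∞) < hitT S sim x}).map (shiftI n))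

lemma measurable_shiftI (q : ℕ) : Measurable (shiftI (I := I) q) :=
  measurable_pi_lambda _ fun _ => measurable_pi_apply _

/-- If the hitting time is the finite value `n`, then `n` belongs to the defining set. -/
lemma hitT_spec {S : Finset I} {sim : I → I → Prop} {x : ℕ → I} {n : ℕ}
    (h : hitT S sim x = (n : ℕ∞)) : 0 < n ∧ x n ∈ S ∧ ¬ sim (x 0) (x n) := by
  classical
  set A : Set ℕ := {k : ℕ | 0 < k ∧ x k ∈ S ∧ ¬ sim (x 0) (x k)} with hA
  rcases A.eq_empty_or_nonempty with he | hne
  · rw [hitT, show {n : ℕ | 0 < n ∧ x n ∈ S ∧ ¬ sim (x 0) (x n)} = A from rfl, he] at h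
    simp at h
  · have hmem : sInf A ∈ A := Nat.sInf_mem hne
    have heq : hitT S sim x = ((sInf A : ℕ) : ℕ∞) := by
      refine le_antisymm (sInf_le ⟨_, hmem, rfl⟩) (le_sInf ?_)
      rintro a ⟨k, hk, rfl⟩
      have h1 : sInf A ≤ k := Nat.sInf_le hk
      show ((sInf A : ℕ) : ℕ∞) ≤ (k : ℕ∞)
      exact_mod_cast h1
    rw [heq] at h
    have hsn : sInf A = n := by exact_mod_cast h
    rw [← hsn]; exact hmem

lemma lawP_apply (S : Finset I) (sim : I → I → Prop) (π : I → ℝ≥0) (P : I → Measure (ℕ → I))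
    {A : Set (ℕ → I)} (hA : MeasurableSet A) :
    lawP S sim π P A
      = ∑ s ∈ S, (π s : ℝ≥0∞) *
          ∑' n : ℕ, P s (shiftI n ⁻¹' A ∩ {x | (n : ℕ∞) < hitT S sim x}) := by
  rw [lawP, Measure.finset_sum_apply]
  refine Finset.sum_congr rfl fun s _ => ?_
  rw [Measure.smul_apply, Measure.sum_apply _ hA, ENNReal.smul_def, smul_eq_mul]
  congr 1
  refine tsum_congr fun n => ?_
  rw [Measure.map_apply (measurable_shiftI n) hA,
    Measure.restrict_apply ((measurable_shiftI n) hA)]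

/-- The key one-step shift identity for a single measure `μ = P s`. -/
lemma key_shift (S : Finset I) (sim : I → I → Prop)
    (μ : Measure (ℕ → I)) [IsProbabilityMeasure μ] {s : I} (hs : s ∈ S)
    (hst : μ {x | x 0 = s} = 1) [MeasurableSingletonClass I]
    {B : Set (ℕ → I)} (hB : ∀ x ∈ B, x 0 ∉ S) :
    (∑' n : ℕ, μ (shiftI n ⁻¹' B ∩ {x | (n : ℕ∞) < hitT S sim x}))
      = ∑' n : ℕ, μ (shiftI n ⁻¹' (shiftI 1 ⁻¹' B) ∩ {x | (n : ℕ∞) < hitT S sim x}) := by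
  set f : ℕ → ℝ≥0∞ := fun n => μ (shiftI n ⁻¹' B ∩ {x | (n : ℕ∞) < hitT S sim x}) with hf
  -- the 0-th term vanishes
  have hcompl : μ ({x : ℕ → I | x 0 = s})ᶜ = 0 := by
    have hms : MeasurableSet ((fun x : ℕ → I => x 0) ⁻¹' {s}) :=
      measurable_pi_apply 0 (measurableSet_singleton s)
    rw [show {x : ℕ → I | x 0 = s} = (fun x : ℕ → I => x 0) ⁻¹' {s} from rfl,
      prob_compl_eq_zero_iff hms]
    exact hst
  have h0 : f 0 = 0 := by
    refine measure_mono_null ?_ hcompl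
    rintro x ⟨hxB, -⟩ hxs
    have hx0 : (shiftI 0 x) 0 ∉ S := hB _ hxB
    have : x 0 ∉ S := by simpa [shiftI] using hx0
    exact this (by rw [Set.mem_setOf_eq.mp hxs]; exact hs)
  -- term-by-term identification of the shifted sum
  have hstep : ∀ n : ℕ,
      shiftI n ⁻¹' (shiftI 1 ⁻¹' B) ∩ {x | (n : ℕ∞) < hitT S sim x}
        = shiftI (n + 1) ⁻¹' B ∩ {x | ((n + 1 : ℕ) : ℕ∞) < hitT S sim x} := by
    intro n
    have hfun : shiftI 1 ∘ shiftI n = shiftI (I := I) (n + 1) := by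
      funext x k
      show x (k + 1 + n) = x (k + (n + 1))
      congr 1
      omega
    have hcomp : shiftI n ⁻¹' (shiftI 1 ⁻¹' B) = shiftI (n + 1) ⁻¹' B := by
      rw [← Set.preimage_comp, hfun]
    rw [hcomp]
    ext x
    simp only [Set.mem_inter_iff, Set.mem_setOf_eq, and_congr_right_iff]
    intro hx
    constructor
    · intro h
      have hx0 : x (n + 1) ∉ S := by
        have := hB _ hx
        simpa [shiftI] using this
      have hne : hitT S sim x ≠ ((n + 1 : ℕ) : ℕ∞) := fun he => hx0 (hitT_spec he).2.1
      have hle : ((n : ℕ∞) + 1) ≤ hitT S sim x :=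
        (ENat.add_one_le_iff (by simp)).mpr h
      have hle' : (((n + 1 : ℕ)) : ℕ∞) ≤ hitT S sim x := by
        push_cast
        exact hle
      exact hle'.lt_of_ne fun hh => hne hh.symm
    · intro h
      exact lt_trans (by exact_mod_cast Nat.lt_succ_self n) h
  calc ∑' n : ℕ, f n = f 0 + ∑' n : ℕ, f (n + 1) := tsum_eq_zero_add' ENNReal.summable
    _ = ∑' n : ℕ, f (n + 1) := by rw [h0, zero_add]
    _ = ∑' n : ℕ, μ (shiftI n ⁻¹' (shiftI 1 ⁻¹' B) ∩ {x | (n : ℕ∞) < hitT S sim x}) := by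
        refine tsum_congr fun n => ?_
        rw [hstep n]

/-- Without any further hypothesis, the stationarity identity holds at cylinders whose first
symbol lies outside `S`:
`ℙ(X_l = i_l, l = 0,…,m) = ∑_{j ∈ I} ℙ(X_0 = j, X_{l+1} = i_l, l = 0,…,m)`. -/
theorem stmt_7 [Fintype I] [MeasurableSingletonClass I]
    (S : Finset I) (hS : S.Nonempty) (hSc : ∃ i : I, i ∉ S)
    (sim : I → I → Prop) (hsim : Equivalence sim)
    (P : I → Measure (ℕ → I)) (hprob : ∀ s ∈ S, IsProbabilityMeasure (P s))
    (hstart : ∀ s ∈ S, P s {x | x 0 = s} = 1)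
    (hTfin : ∀ s ∈ S, P s {x | hitT S sim x < ⊤} = 1)
    (π : I → ℝ≥0) (hπ : ∀ s ∈ S, 0 < π s)
    (hnorm : ∑ s ∈ S, (π s : ℝ≥0∞) * hitET S sim (P s) = 1) :
    ∀ (m : ℕ) (w : ℕ → I), w 0 ∉ S →
      lawP S sim π P {x | ∀ l ≤ m, x l = w l} =
        ∑ j : I, lawP S sim π P {x | x 0 = j ∧ ∀ l ≤ m, x (l + 1) = w l} := by
  classical
  intro m w hw
  set B : Set (ℕ → I) := {x | ∀ l ≤ m, x l = w l} with hBdef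
  have hBmeas : MeasurableSet B := by
    have : B = ⋂ l ∈ Set.Iic m, (fun x : ℕ → I => x l) ⁻¹' {w l} := by
      ext x; simp [hBdef]
    rw [this]
    exact MeasurableSet.biInter (Set.to_countable _)
      fun l _ => (measurable_pi_apply l) (measurableSet_singleton _)
  have hBsub : ∀ x ∈ B, x 0 ∉ S := by
    intro x hx
    rw [hx 0 (Nat.zero_le m)]
    exact hw
  set B' : Set (ℕ → I) := shiftI 1 ⁻¹' B with hB'def
  have hB'eq : B' = {x : ℕ → I | ∀ l ≤ m, x (l + 1) = w l} := by
    ext x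
    simp [hB'def, hBdef, shiftI]
  have hB'meas : MeasurableSet B' := (measurable_shiftI 1) hBmeas
  -- the right-hand side is `lawP` of `B'`
  have hRHS : ∑ j : I, lawP S sim π P {x | x 0 = j ∧ ∀ l ≤ m, x (l + 1) = w l}
      = lawP S sim π P B' := by
    have h1 : ∀ j : I, {x : ℕ → I | x 0 = j ∧ ∀ l ≤ m, x (l + 1) = w l}
        = (fun x : ℕ → I => x 0) ⁻¹' {j} ∩ B' := by
      intro j; ext x; simp [hB'eq]
    calc ∑ j : I, lawP S sim π P {x | x 0 = j ∧ ∀ l ≤ m, x (l + 1) = w l}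
        = ∑ j ∈ (Finset.univ : Finset I),
            lawP S sim π P ((fun x : ℕ → I => x 0) ⁻¹' {j} ∩ B') :=
          Finset.sum_congr rfl fun j _ => by rw [h1 j]
      _ = lawP S sim π P (⋃ j ∈ (Finset.univ : Finset I),
            ((fun x : ℕ → I => x 0) ⁻¹' {j} ∩ B')) := by
          refine (measure_biUnion_finset ?_ ?_).symm
          · intro i _ j _ hij
            refine Set.disjoint_left.mpr ?_
            rintro x ⟨hxi, -⟩ ⟨hxj, -⟩
            exact hij (hxi.symm.trans hxj)
          · intro j _
            exact (((measurable_pi_apply 0) (measurableSet_singleton j)).inter hB'meas)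
      _ = lawP S sim π P B' := by
          congr 1
          ext x
          simp
  rw [hRHS, lawP_apply S sim π P hBmeas, lawP_apply S sim π P hB'meas]
  refine Finset.sum_congr rfl fun s hs => ?_
  haveI := hprob s hs
  rw [key_shift S sim (P s) hs (hstart s hs) hBsub]
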